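/- If a matroid M is representable over a field F, then its dual matroid M^⊥ is also representable over F. -/

import Mathlib

/-- A matroid `M` is representable over a field `F` if there is a map from its ground set to a
vector space over `F` such that a subset of the ground set is independent in `M` if and only if
the corresponding family of vectors is linearly independent. -/
def RepresentableOver {α : Type} (M : Matroid α) (F : Type) [Field F] : Prop :=
  ∃ (W : Type) (_ : AddCommGroup W) (_ : Module F W) (v : α → W),
    ∀ I : Set α, M.Indep I ↔ I ⊆ M.E ∧ LinearIndependent F (fun i : I => v i)

open Set Submodule

variable {α F W : Type} [Field F] [AddCommGroup W] [Module F W]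

/-- The key linear algebra lemma: given a finite family `v : ι → W` and a subset `J ⊆ ι`,
the evaluation functionals at coordinates in `J`, restricted to the kernel of the
linear-combination map, are linearly independent iff every `v j`, `j ∈ J`, lies in the
span of the vectors indexed by the complement of `J`. -/
lemma la_aux {ι : Type} [Fintype ι] (v : ι → W) (J : Set ι) :
    LinearIndependent F (fun j : J =>
      ((LinearMap.proj (j : ι)).comp
        (LinearMap.ker (Fintype.linearCombination F v)).subtype : _ →ₗ[F] F)) ↔
      ∀ j ∈ J, v j ∈ span F (v '' Jᶜ) := by
  classical
  set K := LinearMap.ker (Fintype.linearCombination F v)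
  set f : J → Module.Dual F K := fun j =>
    ((LinearMap.proj (j : ι)).comp K.subtype : _ →ₗ[F] F)
  constructor
  · intro hli j₀ hj₀
    by_contra hsp
    -- get a functional vanishing on the span but not on `v j₀`
    set S := span F (v '' Jᶜ)
    have hq : Submodule.Quotient.mk (p := S) (v j₀) ≠ 0 := by
      simpa [Submodule.Quotient.mk_eq_zero] using hsp
    have : ¬ ∀ ψ : Module.Dual F (W ⧸ S), ψ (Submodule.Quotient.mk (v j₀)) = 0 := by
      rw [Module.forall_dual_apply_eq_zero_iff]; exact hq
    obtain ⟨ψ, hψ⟩ := not_forall.mp this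
    set φ : W →ₗ[F] F := ψ.comp S.mkQ
    have hφ0 : ∀ e : ι, e ∉ J → φ (v e) = 0 := by
      intro e he
      have hvS : v e ∈ S := subset_span ⟨e, he, rfl⟩
      simp [φ, (Submodule.Quotient.mk_eq_zero S).mpr hvS, Submodule.mkQ_apply]
    -- the coefficients of a dependence relation
    set c : J → F := fun j => φ (v j)
    have hrel : ∀ x : K, ∑ j : J, c j * (x : ι → F) (j : ι) = 0 := by
      intro x
      have hx : (Fintype.linearCombination F v) (x : ι → F) = 0 := x.2
      have hx' : ∑ e : ι, (x : ι → F) e • v e = 0 := by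
        rwa [Fintype.linearCombination_apply] at hx
      have h1 : ∑ e : ι, (x : ι → F) e * φ (v e) = 0 := by
        have := congrArg φ hx'
        simpa [map_sum, mul_comm] using this
      have h2 : ∑ e : ι, (x : ι → F) e * φ (v e)
          = ∑ e ∈ Finset.univ.filter (· ∈ J), (x : ι → F) e * φ (v e) := by
        rw [← Finset.sum_filter_add_sum_filter_not Finset.univ (· ∈ J)]
        have : ∑ e ∈ Finset.univ.filter (¬ · ∈ J), (x : ι → F) e * φ (v e) = 0 :=
          Finset.sum_eq_zero fun e he => by
            rw [hφ0 e (by simpa using (Finset.mem_filter.mp he).2), mul_zero]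
        rw [this, add_zero]
      have h3 : ∑ e ∈ Finset.univ.filter (· ∈ J), (x : ι → F) e * φ (v e)
          = ∑ j : J, (x : ι → F) (j : ι) * φ (v (j : ι)) :=
        Finset.sum_subtype (Finset.univ.filter (· ∈ J)) (fun e => by simp) _
      have h4 : ∑ j : J, c j * (x : ι → F) (j : ι)
          = ∑ j : J, (x : ι → F) (j : ι) * φ (v (j : ι)) :=
        Finset.sum_congr rfl fun j _ => mul_comm _ _
      rw [h4, ← h3, ← h2, h1]
    have hc0 := Fintype.linearIndependent_iff.mp hli c ?_ ⟨j₀, hj₀⟩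
    · exact hψ (by simpa [c, φ] using hc0)
    · ext x
      simpa [f, mul_comm] using hrel x
  · intro h
    rw [Fintype.linearIndependent_iff]
    intro g hg j₀
    obtain ⟨l, hl, hlv⟩ := (Finsupp.mem_span_image_iff_linearCombination F).mp (h _ j₀.2)
    -- build the kernel element `single j₀ 1 - l`
    set x : ι → F := Pi.single (j₀ : ι) 1 - fun e => l e
    have hxK : x ∈ K := by
      have h1 : (Fintype.linearCombination F v) (Pi.single (j₀ : ι) (1 : F)) = v j₀ := by
        rw [Fintype.linearCombination_apply_single, one_smul]
      have h2 : (Fintype.linearCombination F v) (fun e => l e) = v j₀ := by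
        rw [Fintype.linearCombination_apply, ← hlv, Finsupp.linearCombination_apply,
          Finsupp.sum_fintype]
        intro i; exact zero_smul F (v i)
      simp [LinearMap.mem_ker, map_sub, h1, h2, x, K]
    have := congrFun (congrArg (fun (ψ : Module.Dual F K) => (ψ : K → F)) hg) ⟨x, hxK⟩
    have hsum : ∑ j : J, g j * x (j : ι) = 0 := by
      simpa [f, mul_comm] using this
    have hxj : ∀ j : J, x (j : ι) = if j = j₀ then 1 else 0 := by
      intro j
      have hlj : l (j : ι) = 0 := by
        exact (Finsupp.mem_supported' F l).mp hl _ (by simp [j.2])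
      by_cases hjj : j = j₀
      · subst hjj; simp [x, hlj, Pi.single_eq_same]
      · have : (j : ι) ≠ (j₀ : ι) := fun hc => hjj (Subtype.ext hc)
        simp [x, hlj, Pi.single_eq_of_ne this, hjj]
    rw [Finset.sum_congr rfl (fun j _ => by rw [hxj j])] at hsum
    simpa using hsum

/-- If `M` is represented by `v`, independent sets behave like linearly independent sets:
one can insert an element whose vector is outside the span. -/
lemma indep_insert_aux {M : Matroid α} {v : α → W}
    (hv : ∀ I : Set α, M.Indep I ↔ I ⊆ M.E ∧ LinearIndependent F (fun i : I => v i))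
    {B : Set α} {e : α} (hB : M.Indep B) (he : e ∈ M.E)
    (hsp : v e ∉ span F (v '' B)) : M.Indep (insert e B) := by
  obtain ⟨hBE, hli⟩ := (hv B).mp hB
  have hinjB : Set.InjOn v B := fun x hx y hy hxy =>
    congrArg Subtype.val (hli.injective (a₁ := ⟨x, hx⟩) (a₂ := ⟨y, hy⟩) hxy)
  have heB : e ∉ B := fun hh => hsp (subset_span ⟨e, hh, rfl⟩)
  have hinj : Set.InjOn v (insert e B) := by
    intro x hx y hy hxy
    rcases hx with rfl | hx
    · rcases hy with rfl | hy
      · rfl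
      · exact absurd (hxy ▸ subset_span ⟨y, hy, rfl⟩ : v x ∈ span F (v '' B)) hsp
    · rcases hy with rfl | hy
      · exact absurd (hxy ▸ subset_span ⟨x, hx, rfl⟩ : v y ∈ span F (v '' B)) hsp
      · exact hinjB hx hy hxy
  rw [hv]
  refine ⟨insert_subset he hBE, ?_⟩
  show LinearIndepOn F v (insert e B)
  rw [linearIndepOn_iff_image hinj]
  have h1 : LinearIndepOn F id (v '' B) :=
    (linearIndepOn_iff_image hinjB).mp hli
  have h2 := h1.insert (x := v e) (by simpa using hsp)
  rw [image_insert_eq]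
  exact h2

/-- In a represented matroid, an element of an independent set is not in the span of the
vectors of a subset not containing it. -/
lemma not_mem_span_aux {M : Matroid α} {v : α → W}
    (hv : ∀ I : Set α, M.Indep I ↔ I ⊆ M.E ∧ LinearIndependent F (fun i : I => v i))
    {J B : Set α} {j : α} (hJ : M.Indep J) (hBJ : B ⊆ J) (hj : j ∈ J) (hjB : j ∉ B) :
    v j ∉ span F (v '' B) := by
  have hli := ((hv J).mp hJ).2
  have hnot := hli.notMem_span_image (s := {x : J | (x : α) ∈ B}) (x := ⟨j, hj⟩)
    (by simp [hjB])
  have himg : (fun i : J => v i) '' {x : J | (x : α) ∈ B} = v '' B := by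
    ext w
    constructor
    · rintro ⟨⟨x, hxJ⟩, hxB, rfl⟩; exact ⟨x, hxB, rfl⟩
    · rintro ⟨x, hxB, rfl⟩; exact ⟨⟨x, hBJ hxB⟩, hxB, rfl⟩
  rwa [himg] at hnot

/-- The matroid-side equivalence: the complement of `I` contains a base iff every vector of `I`
is in the span of the vectors of the complement. -/
lemma mat_aux {M : Matroid α} {v : α → W}
    (hv : ∀ I : Set α, M.Indep I ↔ I ⊆ M.E ∧ LinearIndependent F (fun i : I => v i))
    {I : Set α} (hIE : I ⊆ M.E) :
    (∃ B, M.IsBase B ∧ B ⊆ M.E \ I) ↔ ∀ i ∈ I, v i ∈ span F (v '' (M.E \ I)) := by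
  constructor
  · rintro ⟨B, hB, hBI⟩ i hi
    have hspan : ∀ e ∈ M.E, v e ∈ span F (v '' B) := by
      intro e he
      by_contra hsp
      have hind := indep_insert_aux hv hB.indep he hsp
      have := hB.eq_of_subset_indep hind (subset_insert _ _)
      exact hsp (subset_span ⟨e, this ▸ mem_insert _ _, rfl⟩)
    exact span_mono (Set.image_mono hBI) (hspan i (hIE hi))
  · intro h
    obtain ⟨B, hB⟩ := M.exists_isBasis (M.E \ I) (diff_subset)
    have hBsub : B ⊆ M.E \ I := hB.subset
    have hBind : M.Indep B := hB.indep
    have hstep1 : ∀ e ∈ M.E \ I, v e ∈ span F (v '' B) := by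
      intro e he
      by_cases heB : e ∈ B
      · exact subset_span ⟨e, heB, rfl⟩
      by_contra hsp
      have hind := indep_insert_aux hv hBind he.1 hsp
      have := hB.eq_of_subset_indep hind (subset_insert _ _) (insert_subset he hBsub)
      exact heB (this ▸ mem_insert _ _)
    have hstep2 : ∀ e ∈ M.E, v e ∈ span F (v '' B) := by
      intro e he
      by_cases heI : e ∈ I
      · have h1 : v '' (M.E \ I) ⊆ span F (v '' B) := by
          rintro w ⟨x, hx, rfl⟩; exact hstep1 x hx
        exact span_le.mpr h1 (h e heI)
      · exact hstep1 e ⟨he, heI⟩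
    refine ⟨B, ?_, hBsub⟩
    rw [Matroid.isBase_iff_maximal_indep]
    refine ⟨hBind, fun J hJ hBJ => ?_⟩
    intro j hj
    by_contra hjB
    exact not_mem_span_aux hv hJ hBJ hj hjB (hstep2 j (hJ.subset_ground hj))

/-- If a (finite) matroid `M` is representable over a field `F`, then its dual matroid `M✶`
is also representable over `F`. -/
theorem dual_representable {α : Type} (M : Matroid α) [M.Finite] (F : Type) [Field F]
    (h : RepresentableOver M F) : RepresentableOver M✶ F := by
  classical
  obtain ⟨W, _, _, v, hv⟩ := h
  haveI : Fintype ↥M.E := M.ground_finite.fintype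
  set v' : ↥M.E → W := fun e => v ↑e with hv'def
  set K := LinearMap.ker (Fintype.linearCombination F v') with hKdef
  set w : α → Module.Dual F K := fun a =>
    if ha : a ∈ M.E then ((LinearMap.proj (⟨a, ha⟩ : ↥M.E)).comp K.subtype) else 0 with hwdef
  refine ⟨Module.Dual F K, inferInstance, inferInstance, w, fun I => ?_⟩
  by_cases hIE : I ⊆ M.E
  · set J : Set ↥M.E := {e : ↥M.E | (e : α) ∈ I} with hJdef
    set f : J → Module.Dual F K := fun j =>
      ((LinearMap.proj (j : ↥M.E)).comp K.subtype : _ →ₗ[F] F) with hfdef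
    have himg : v' '' Jᶜ = v '' (M.E \ I) := by
      ext x
      constructor
      · rintro ⟨e, he, rfl⟩
        exact ⟨(e : α), ⟨e.2, he⟩, rfl⟩
      · rintro ⟨a, ⟨haE, haI⟩, rfl⟩
        exact ⟨⟨a, haE⟩, haI, rfl⟩
    have hforall : (∀ j ∈ J, v' j ∈ span F (v' '' Jᶜ)) ↔
        (∀ i ∈ I, v i ∈ span F (v '' (M.E \ I))) := by
      rw [himg]
      constructor
      · intro hj i hi
        exact hj ⟨i, hIE hi⟩ hi
      · intro hi j hj
        exact hi (j : α) hj
    let eqv : ↥I ≃ ↥J :=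
      { toFun := fun i => ⟨⟨(i : α), hIE i.2⟩, i.2⟩
        invFun := fun j => ⟨((j : ↥M.E) : α), j.2⟩
        left_inv := fun i => rfl
        right_inv := fun j => rfl }
    have heq : (fun i : I => w i) = f ∘ eqv := by
      funext i
      simp only [hwdef, Function.comp_apply]
      rw [dif_pos (hIE i.2)]
      rfl
    have hdual : M✶.Indep I ↔ ∃ B, M.IsBase B ∧ B ⊆ M.E \ I := by
      rw [← Matroid.coindep_def, Matroid.coindep_iff_exists' , and_iff_left hIE]
    rw [hdual, mat_aux hv hIE]
    have hla := (la_aux (F := F) v' J).trans hforall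
    constructor
    · intro hspan
      refine ⟨hIE, ?_⟩
      rw [heq]
      exact (linearIndependent_equiv eqv).mpr (hla.mpr hspan)
    · rintro ⟨-, hli⟩
      rw [heq] at hli
      exact hla.mp ((linearIndependent_equiv eqv).mp hli)
  · refine iff_of_false (fun h' => hIE ?_) (fun h' => hIE h'.1)
    have := h'.subset_ground
    rwa [Matroid.dual_ground] at this
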